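/- Let n ≥ 1, let H₀ be the matrix indexed by ℤ/(2n+1) with entries (H₀)_{ij} = δ_{ij} + (1/2)(δ_{i,j+1} + δ_{i,j−1}) (indices mod 2n+1), and let ψ = p_n be the unit vector with components ψ_j = exp(2πi·jn/(2n+1))/√(2n+1). Then for every subset S of ℤ/(2n+1), −⟨ψ| 1_S H₀ 1_{S^c} |ψ⟩ = −(cos(2πn/(2n+1))/(2(2n+1)))·(|{j ∈ S : j+1 ∈ S^c}| + |{j ∈ S : j−1 ∈ S^c}|), where S^c is the complement of S and addition is mod 2n+1. -/

import Mathlib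

open scoped BigOperators

noncomputable def ringH (n : ℕ) : Matrix (ZMod (2 * n + 1)) (ZMod (2 * n + 1)) ℂ :=
  fun i j => (if i = j then 1 else 0) +
    (1 / 2) * ((if i = j + 1 then 1 else 0) + (if i = j - 1 then 1 else 0))

noncomputable def pvec (n : ℕ) (k : ℤ) : ZMod (2 * n + 1) → ℂ :=
  fun j => Complex.exp (2 * Real.pi * Complex.I * (j.val : ℂ) * (k : ℂ) / (2 * n + 1)) /
    (Real.sqrt (2 * n + 1) : ℂ)

noncomputable def Fe (n : ℕ) (m : ℤ) : ℂ :=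
  Complex.exp (2 * Real.pi * Complex.I * (m : ℂ) * (n : ℂ) / (2 * (n : ℂ) + 1))

lemma Ncast_ne (n : ℕ) : (2 * (n : ℂ) + 1) ≠ 0 := by
  have : ((2 * n + 1 : ℕ) : ℂ) ≠ 0 := Nat.cast_ne_zero.mpr (by omega)
  push_cast at this
  exact this

lemma Fe_add (n : ℕ) (a b : ℤ) : Fe n (a + b) = Fe n a * Fe n b := by
  rw [Fe, Fe, Fe, ← Complex.exp_add]
  congr 1
  push_cast
  ring

lemma Fe_per (n : ℕ) (m : ℤ) : Fe n (((2 * n + 1 : ℕ) : ℤ) * m) = 1 := by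
  have hN := Ncast_ne n
  have harg : 2 * (Real.pi : ℂ) * Complex.I * ((((2 * n + 1 : ℕ) : ℤ) * m : ℤ) : ℂ) * (n : ℂ) /
      (2 * (n : ℂ) + 1) = ((m * n : ℤ) : ℂ) * (2 * (Real.pi : ℂ) * Complex.I) := by
    push_cast
    field_simp
  rw [Fe, harg, Complex.exp_int_mul_two_pi_mul_I]

lemma Fe_congr (n : ℕ) (a b : ℤ) (h : ((a : ℤ) : ZMod (2 * n + 1)) = b) : Fe n a = Fe n b := by
  have hdvd : ((2 * n + 1 : ℕ) : ℤ) ∣ b - a := by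
    rw [← ZMod.intCast_zmod_eq_zero_iff_dvd]
    push_cast
    rw [h]
    ring
  obtain ⟨m, hm⟩ := hdvd
  have hb : b = a + ((2 * n + 1 : ℕ) : ℤ) * m := by linarith
  rw [hb, Fe_add, Fe_per, mul_one]

lemma conj_Fe (n : ℕ) (m : ℤ) : (starRingEnd ℂ) (Fe n m) = Fe n (-m) := by
  rw [Fe, Fe, ← Complex.exp_conj]
  congr 1
  simp only [map_div₀, map_mul, Complex.conj_I, map_ofNat, Complex.conj_ofReal,
    map_intCast, map_natCast, map_one, map_add]
  push_cast
  ring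

lemma pvec_eq (n : ℕ) (j : ZMod (2 * n + 1)) :
    pvec n n j = Fe n (j.val : ℤ) / (Real.sqrt (2 * n + 1) : ℂ) := by
  rw [pvec, Fe]
  norm_cast

lemma conj_mul_pvec (n : ℕ) (x y : ZMod (2 * n + 1)) :
    (starRingEnd ℂ) (pvec n n x) * pvec n n y =
      Fe n ((y.val : ℤ) - (x.val : ℤ)) / (2 * (n : ℂ) + 1) := by
  rw [pvec_eq, pvec_eq, map_div₀, conj_Fe, Complex.conj_ofReal, div_mul_div_comm, ← Fe_add]
  have hs : (Real.sqrt (2 * n + 1) : ℂ) * (Real.sqrt (2 * n + 1) : ℂ) = 2 * (n : ℂ) + 1 := by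
    rw [← Complex.ofReal_mul, Real.mul_self_sqrt (by positivity)]
    push_cast
    ring
  rw [hs]
  congr 2
  ring

lemma valcast (n : ℕ) (a : ZMod (2 * n + 1)) : ((a.val : ℕ) : ZMod (2 * n + 1)) = a := by
  simp [ZMod.natCast_val, ZMod.cast_id]

lemma card_eq_aux (n : ℕ) (S : Finset (ZMod (2 * n + 1))) :
    (S.filter fun j => j + 1 ∉ S).card = (S.filter fun j => j - 1 ∉ S).card := by
  classical
  have key : (S.filter fun j => j + 1 ∈ S).card = (S.filter fun j => j - 1 ∈ S).card := by
    apply Finset.card_bij (fun j _ => j + 1)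
    · intro a ha
      simp only [Finset.mem_filter] at ha ⊢
      exact ⟨ha.2, by simpa using ha.1⟩
    · intro a ha b hb h
      simpa using h
    · intro b hb
      simp only [Finset.mem_filter] at hb
      exact ⟨b - 1, Finset.mem_filter.mpr ⟨hb.2, by simpa using hb.1⟩, by ring⟩
  have h1 := Finset.card_filter_add_card_filter_not (s := S) (p := fun j => j + 1 ∈ S)
  have h2 := Finset.card_filter_add_card_filter_not (s := S) (p := fun j => j - 1 ∈ S)
  omega

theorem stmt_17 (n : ℕ) (hn : 1 ≤ n) (S : Finset (ZMod (2 * n + 1))) :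
    -(∑ x ∈ S, ∑ y ∈ Sᶜ, (starRingEnd ℂ) (pvec n n x) * ringH n x y * pvec n n y) =
      ((-(Real.cos (2 * Real.pi * (n : ℝ) / (2 * n + 1)) / (2 * (2 * n + 1))) *
        (((S.filter fun j => j + 1 ∉ S).card : ℝ) +
          ((S.filter fun j => j - 1 ∉ S).card : ℝ)) : ℝ) : ℂ) := by
  classical
  have htwo : (2 : ZMod (2 * n + 1)) ≠ 0 := by
    intro h
    have h2 : ((2 : ℕ) : ZMod (2 * n + 1)) = 0 := by push_cast; exact h
    rw [ZMod.natCast_eq_zero_iff] at h2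
    have := Nat.le_of_dvd (by norm_num) h2
    omega
  set cp : ℂ := Fe n 1 / (2 * (2 * (n : ℂ) + 1)) with hcp
  set cm : ℂ := Fe n (-1) / (2 * (2 * (n : ℂ) + 1)) with hcm
  have hterm : ∀ x ∈ S, ∀ y ∈ Sᶜ,
      (starRingEnd ℂ) (pvec n n x) * ringH n x y * pvec n n y =
        (if y = x + 1 then cp else 0) + (if y = x - 1 then cm else 0) := by
    intro x hx y hy
    have hxy : x ≠ y := by
      intro h
      exact (Finset.mem_compl.mp hy) (h ▸ hx)
    by_cases h1 : y = x + 1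
    · have hx1 : x = y - 1 := by rw [h1]; ring
      have hx2 : x ≠ y + 1 := by
        rw [h1]; intro hc; exact htwo (by first | linear_combination hc | linear_combination -hc)
      have h2 : y ≠ x - 1 := by
        rw [h1]; intro hc; exact htwo (by first | linear_combination hc | linear_combination -hc)
      have hFe : Fe n ((y.val : ℤ) - (x.val : ℤ)) = Fe n 1 := by
        apply Fe_congr
        push_cast [valcast]
        rw [h1]; ring
      simp only [ringH, if_neg hxy, if_neg hx2, if_pos hx1, if_pos h1, if_neg h2]
      have : (starRingEnd ℂ) (pvec n n x) * ((0 : ℂ) + 1 / 2 * (0 + 1)) * pvec n n y =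
          ((starRingEnd ℂ) (pvec n n x) * pvec n n y) / 2 := by ring
      rw [this, conj_mul_pvec, hFe, hcp]
      rw [add_zero, div_div, mul_comm (2 * (n : ℂ) + 1) 2]
    · by_cases h2 : y = x - 1
      · have hx2 : x = y + 1 := by rw [h2]; ring
        have hx1 : x ≠ y - 1 := by
          rw [h2]; intro hc; exact htwo (by first | linear_combination hc | linear_combination -hc)
        have hFe : Fe n ((y.val : ℤ) - (x.val : ℤ)) = Fe n (-1) := by
          apply Fe_congr
          push_cast [valcast]
          rw [h2]; ring
        simp only [ringH, if_neg hxy, if_pos hx2, if_neg hx1, if_neg h1, if_pos h2]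
        have : (starRingEnd ℂ) (pvec n n x) * ((0 : ℂ) + 1 / 2 * (1 + 0)) * pvec n n y =
            ((starRingEnd ℂ) (pvec n n x) * pvec n n y) / 2 := by ring
        rw [this, conj_mul_pvec, hFe, hcm]
        rw [zero_add, div_div, mul_comm (2 * (n : ℂ) + 1) 2]
      · have hx1 : x ≠ y + 1 := by
          intro hc; exact h2 (by first | linear_combination hc | linear_combination -hc)
        have hx2 : x ≠ y - 1 := by
          intro hc; exact h1 (by first | linear_combination hc | linear_combination -hc)
        simp only [ringH, if_neg hxy, if_neg hx1, if_neg hx2, if_neg h1, if_neg h2]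
        ring
  rw [Finset.sum_congr rfl (fun x hx => Finset.sum_congr rfl (fun y hy => hterm x hx y hy))]
  simp only [Finset.sum_add_distrib, Finset.sum_ite_eq', Finset.mem_compl]
  rw [← Finset.sum_filter, ← Finset.sum_filter, Finset.sum_const, Finset.sum_const,
    nsmul_eq_mul, nsmul_eq_mul]
  rw [card_eq_aux n S]
  have hcos : Fe n 1 + Fe n (-1) =
      2 * Complex.cos ((2 * Real.pi * (n : ℝ) / (2 * n + 1) : ℝ) : ℂ) := by
    rw [Fe, Fe]
    have e1 : 2 * (Real.pi : ℂ) * Complex.I * ((1 : ℤ) : ℂ) * (n : ℂ) / (2 * (n : ℂ) + 1) =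
        ((2 * Real.pi * (n : ℝ) / (2 * n + 1) : ℝ) : ℂ) * Complex.I := by
      push_cast; ring
    have e2 : 2 * (Real.pi : ℂ) * Complex.I * ((-1 : ℤ) : ℂ) * (n : ℂ) / (2 * (n : ℂ) + 1) =
        -(((2 * Real.pi * (n : ℝ) / (2 * n + 1) : ℝ) : ℂ) * Complex.I) := by
      push_cast; ring
    rw [e1, e2, Complex.cos]
    ring
  push_cast at hcos
  push_cast [Complex.ofReal_cos]
  set B : ℂ := ((S.filter fun j => j - 1 ∉ S).card : ℂ)
  rw [hcp, hcm]
  linear_combination (-(B / (2 * (2 * (n : ℂ) + 1)))) * hcos
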